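/- Let L be a finite-dimensional complex semisimple Lie algebra. Then for every A ∈ L there exist X₁, X₂, Y₁, Y₂ ∈ L such that A = ⁅X₁, X₂⁆ + ⁅Y₁, Y₂⁆. -/

import Mathlib

open LieAlgebra LieModule Module LieAlgebra.IsKilling Submodule Set

section Aux

variable {L : Type*} [LieRing L] [LieAlgebra ℂ L] [Module.Finite ℂ L]
  [LieAlgebra.IsKilling ℂ L] (H : LieSubalgebra ℂ L) [H.IsCartanSubalgebra]

lemma aux_sum_lie {ι : Type*} (s : Finset ι) (g : ι → L) (y : L) :
    ⁅∑ i ∈ s, g i, y⁆ = ∑ i ∈ s, ⁅g i, y⁆ := by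
  induction s using Finset.cons_induction with
  | empty => simp
  | cons i s hi ih => simp [Finset.sum_cons, add_lie, ih]

lemma aux_lie_sum {ι : Type*} (s : Finset ι) (g : ι → L) (y : L) :
    ⁅y, ∑ i ∈ s, g i⁆ = ∑ i ∈ s, ⁅y, g i⁆ := by
  induction s using Finset.cons_induction with
  | empty => simp
  | cons i s hi ih => simp [Finset.sum_cons, lie_add, ih]

/-- The sum of all nonzero root spaces, as a submodule of `L`. -/
noncomputable def auxV : Submodule ℂ L :=
  ⨆ χ : {χ : Weight ℂ H L // χ.IsNonZero}, (rootSpace H (χ.1 : H → ℂ) : Submodule ℂ L)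

lemma aux_rootSpace_le_V {χ : H → ℂ} (hχ : χ ≠ 0) :
    (rootSpace H χ : Submodule ℂ L) ≤ auxV H := by
  rcases eq_or_ne (rootSpace H χ) ⊥ with h | h
  · rw [h]; simp
  · exact le_iSup (fun χ : {χ : Weight ℂ H L // χ.IsNonZero} =>
      (rootSpace H (χ.1 : H → ℂ) : Submodule ℂ L)) ⟨⟨χ, h⟩, fun h0 => hχ h0⟩

/-- A regular element: all nonzero roots are nonzero on it. -/
lemma aux_exists_regular :
    ∃ h₀ : H, ∀ α : Weight ℂ H L, α.IsNonZero → α h₀ ≠ 0 := by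
  by_contra hcon
  push_neg at hcon
  have hcover : ⋃ α : {χ : Weight ℂ H L // χ.IsNonZero},
      ((LinearMap.ker (Weight.toLinear ℂ H L α.1) : Submodule ℂ H) : Set H) = Set.univ := by
    ext x
    simp only [Set.mem_iUnion, Set.mem_univ, iff_true]
    obtain ⟨α, hα, hx⟩ := hcon x
    exact ⟨⟨α, hα⟩, by simpa [LinearMap.mem_ker] using hx⟩
  obtain ⟨⟨α, hα⟩, htop⟩ := Subspace.exists_eq_top_of_iUnion_eq_univ hcover
  refine hα ?_
  have : Weight.toLinear ℂ H L α = 0 := LinearMap.ker_eq_top.mp htop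
  ext x
  simpa using LinearMap.congr_fun this x

/-- Every element of `auxV` is a bracket with a regular element. -/
lemma aux_surj {h₀ : H} (hreg : ∀ α : Weight ℂ H L, α.IsNonZero → α h₀ ≠ 0)
    {w : L} (hw : w ∈ auxV H) : ∃ y : L, ⁅(h₀ : L), y⁆ = w := by
  refine Submodule.iSup_induction (motive := fun w => ∃ y : L, ⁅(h₀ : L), y⁆ = w) _ hw ?_ ⟨0, by simp⟩ ?_
  · rintro ⟨α, hα⟩ x hx
    refine ⟨(α h₀)⁻¹ • x, ?_⟩
    have := lie_eq_smul_of_mem_rootSpace (K := ℂ) hx h₀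
    rw [lie_smul]
    rw [LieSubalgebra.coe_bracket_of_module] at this
    rw [this, smul_smul, inv_mul_cancel₀ (hreg α hα), one_smul]
  · rintro x y ⟨u, hu⟩ ⟨v, hv⟩
    exact ⟨u + v, by rw [lie_add, hu, hv]⟩

/-- Decomposition of any element. -/
lemma aux_decomp (A : L) : ∃ a : H, A - a ∈ auxV H := by
  have htop : A ∈ (⊤ : LieSubmodule ℂ H L) := trivial
  rw [← iSup_genWeightSpace_eq_top ℂ H L, ← LieSubmodule.mem_toSubmodule,
    LieSubmodule.iSup_toSubmodule] at htop
  have : A ∈ (H : Submodule ℂ L) ⊔ auxV H := by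
    refine (iSup_le fun χ => ?_ : _ ≤ (H : Submodule ℂ L) ⊔ auxV H) htop
    rcases eq_or_ne χ 0 with rfl | hχ
    · have h0 : (rootSpace H (0 : H → ℂ)) = H.toLieSubmodule := rootSpace_zero_eq ℂ L H
      rw [show genWeightSpace L (0 : H → ℂ) = rootSpace H (0 : H → ℂ) from rfl, h0,
        LieSubalgebra.coe_toLieSubmodule]
      exact le_sup_left
    · exact le_trans (aux_rootSpace_le_V H hχ) le_sup_right
  obtain ⟨a, ha, n, hn, hA⟩ := Submodule.mem_sup.mp this
  exact ⟨⟨a, ha⟩, by rwa [← hA, add_sub_cancel_left]⟩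

/-- Coroots span the Cartan subalgebra. -/
lemma aux_span_coroot :
    (⊤ : Submodule ℂ H) ≤ Submodule.span ℂ
      (Set.range fun α : {χ : Weight ℂ H L // χ.IsNonZero} => coroot α.1) := by
  intro x _
  have hspan := span_weight_isNonZero_eq_top ℂ L H
  -- map by (cartanEquivDual H).symm
  have : x ∈ Submodule.map ((cartanEquivDual H).symm : Module.Dual ℂ H →ₗ[ℂ] H)
      (Submodule.span ℂ ({α : Weight ℂ H L | α.IsNonZero}.image (Weight.toLinear ℂ H L))) := by
    rw [hspan]
    exact ⟨cartanEquivDual H x, trivial, by simp⟩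
  rw [Submodule.map_span] at this
  refine Submodule.span_le.mpr ?_ this
  rintro - ⟨-, ⟨α, hα, rfl⟩, rfl⟩
  have hne : (α ((cartanEquivDual H).symm α) : ℂ) ≠ 0 :=
    root_apply_cartanEquivDual_symm_ne_zero hα
  set c : ℂ := α ((cartanEquivDual H).symm (Weight.toLinear ℂ H L α)) with hc
  have h2c : (2 : ℂ) * c⁻¹ ≠ 0 := mul_ne_zero two_ne_zero (inv_ne_zero hne)
  have hco : coroot α = ((2 : ℂ) * c⁻¹) • (cartanEquivDual H).symm (Weight.toLinear ℂ H L α) := by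
    rw [coroot, ← Nat.cast_smul_eq_nsmul ℂ, smul_smul, Nat.cast_ofNat]
  have key : (cartanEquivDual H).symm (Weight.toLinear ℂ H L α)
      = ((2 : ℂ) * c⁻¹)⁻¹ • coroot α := by
    rw [hco, smul_smul, inv_mul_cancel₀ h2c, one_smul]
  simp only [SetLike.mem_coe, LinearEquiv.coe_coe]
  rw [key]
  exact Submodule.smul_mem _ _ (Submodule.subset_span ⟨⟨α, hα⟩, rfl⟩)

end Aux

section Aux2

variable {L : Type*} [LieRing L] [LieAlgebra ℂ L] [Module.Finite ℂ L]
  [LieAlgebra.IsKilling ℂ L] (H : LieSubalgebra ℂ L) [H.IsCartanSubalgebra]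

lemma aux_H_bracket (a : H) : ∃ u v : L, ⁅u, v⁆ - (a : L) ∈ auxV H := by
  classical
  have _inst : Fintype {χ : Weight ℂ H L // χ.IsNonZero} := Fintype.ofFinite _
  have hsl2 : ∀ i : {χ : Weight ℂ H L // χ.IsNonZero},
      ∃ e f : L, e ∈ rootSpace H (i.1 : H → ℂ) ∧ f ∈ rootSpace H (-(i.1 : H → ℂ)) ∧
        ⁅e, f⁆ = (coroot i.1 : L) := by
    intro i
    obtain ⟨h, e, f, ht, he, hf⟩ := exists_isSl2Triple_of_weight_isNonZero i.2
    exact ⟨e, f, he, hf, ht.lie_e_f.trans (ht.h_eq_coroot i.2 he hf)⟩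
  choose e f he hf hef using hsl2
  obtain ⟨c, hc⟩ := (mem_span_range_iff_exists_fun ℂ).mp
    (aux_span_coroot H (Submodule.mem_top : a ∈ ⊤))
  refine ⟨∑ i, c i • e i, ∑ j, f j, ?_⟩
  have expand : ⁅∑ i, c i • e i, ∑ j, f j⁆ = ∑ i, ∑ j, c i • ⁅e i, f j⁆ := by
    rw [aux_sum_lie]
    refine Finset.sum_congr rfl fun i _ => ?_
    rw [smul_lie, aux_lie_sum, Finset.smul_sum]
  have diag : ∀ i, ∑ j, c i • ⁅e i, f j⁆
      = c i • (coroot i.1 : L) + ∑ j ∈ Finset.univ.erase i, c i • ⁅e i, f j⁆ := by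
    intro i
    rw [← Finset.add_sum_erase _ _ (Finset.mem_univ i), hef i]
  have hcL : ∑ i, c i • (coroot i.1 : L) = (a : L) := by
    exact_mod_cast congrArg (Subtype.val) hc
  rw [expand]
  have : ∑ i, ∑ j, c i • ⁅e i, f j⁆
      = (a : L) + ∑ i, ∑ j ∈ Finset.univ.erase i, c i • ⁅e i, f j⁆ := by
    rw [← hcL, ← Finset.sum_add_distrib]
    exact Finset.sum_congr rfl fun i _ => diag i
  rw [this, add_sub_cancel_left]
  refine Submodule.sum_mem _ fun i _ => Submodule.sum_mem _ fun j hj => ?_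
  refine Submodule.smul_mem _ _ ?_
  have hmem : ⁅e i, f j⁆ ∈ rootSpace H ((i.1 : H → ℂ) + (-(j.1 : H → ℂ))) :=
    lie_mem_genWeightSpace_of_mem_genWeightSpace (he i) (hf j)
  refine aux_rootSpace_le_V H ?_ hmem
  intro hzero
  have hij : (i.1 : H → ℂ) = (j.1 : H → ℂ) := by
    funext x
    have h1 := congr_fun hzero x
    have h2 : (i.1 : H → ℂ) x + -((j.1 : H → ℂ) x) = 0 := by simpa using h1
    exact add_neg_eq_zero.mp h2
  exact (Finset.mem_erase.mp hj).1 (Subtype.ext (Weight.ext (congr_fun hij.symm)))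

end Aux2

theorem stmt_13 {L : Type*} [LieRing L] [LieAlgebra ℂ L] [Module.Finite ℂ L]
    [LieAlgebra.IsKilling ℂ L] :
    ∀ A : L, ∃ X₁ X₂ Y₁ Y₂ : L, A = ⁅X₁, X₂⁆ + ⁅Y₁, Y₂⁆ := by
  intro A
  obtain ⟨x, hx⟩ := LieAlgebra.exists_isCartanSubalgebra_engel (K := ℂ) (L := L)
  set H : LieSubalgebra ℂ L := LieSubalgebra.engel ℂ x
  obtain ⟨a, ha⟩ := aux_decomp H A
  obtain ⟨u, v, huv⟩ := aux_H_bracket H a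
  obtain ⟨h₀, hreg⟩ := aux_exists_regular H
  have hmem : A - ⁅u, v⁆ ∈ auxV H := by
    have := Submodule.sub_mem _ ha huv
    rwa [sub_sub_sub_cancel_right] at this
  obtain ⟨y, hy⟩ := aux_surj H hreg hmem
  exact ⟨u, v, (h₀ : L), y, by rw [hy]; abel⟩
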